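/- arXiv:1009.2698 — 2 statements merged into one kernel-verified Lean document; each statement's English description precedes it below -/
import Mathlib

section
/- Let ψ: [0,1] → ℝ be continuously differentiable with ψ' Lipschitz with constant L. Then there is a constant C (depending only on ψ and L) such that for all positive integers N and all λ ∈ [0, 0.5], |(1/N) Σ_{t=1}^{N} ψ((2t−1)/(2N)) e^{-i 2π λ t} − (∫_0^1 ψ(u) e^{-i 2π N λ u} du) · e^{-i π λ} · (π λ)/sin(π λ)| ≤ C/N, where (πλ)/sin(πλ) is interpreted as 1 at λ = 0. -/
open Real Complex Finset

lemma exp_ident (w : ℝ) : Complex.exp (-(Complex.I*w)) - Complex.exp (Complex.I*w)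
    = -2 * Complex.I * Complex.sin w := by
  rw [Complex.sin]
  field_simp
  ring_nf
  simp [Complex.I_sq]
  ring

lemma exp_integral_aux (N : ℕ) (hN : 0 < N) (lam : ℝ) (h0 : 0 ≤ lam) (h1 : lam ≤ 0.5)
    (i : ℕ) :
    (if lam = 0 then (1:ℂ) else (Real.pi * lam / Real.sin (Real.pi * lam) : ℂ))
      * Complex.exp (-(Complex.I * Real.pi * lam))
      * (∫ u in ((i:ℝ)/N)..(((i:ℝ)+1)/N),
          Complex.exp (-(Complex.I * 2 * Real.pi * N * lam * u)))
    = (1 / N : ℂ) * Complex.exp (-(Complex.I * 2 * Real.pi * lam * ((i:ℝ)+1))) := by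
  have hNr : (0:ℝ) < N := Nat.cast_pos.mpr hN
  have hNC : (N:ℂ) ≠ 0 := by exact_mod_cast hNr.ne'
  by_cases hl : lam = 0
  · subst hl
    simp [intervalIntegral.integral_const]
    field_simp
    ring
  · have hlam0 : 0 < lam := lt_of_le_of_ne h0 (Ne.symm hl)
    have hw0 : 0 < Real.pi * lam := by positivity
    have hsinpos : 0 < Real.sin (Real.pi * lam) :=
      Real.sin_pos_of_pos_of_lt_pi hw0 (by nlinarith [Real.pi_pos])
    have hsinC : (Real.sin (Real.pi * lam) : ℂ) ≠ 0 := by exact_mod_cast hsinpos.ne'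
    have hpiC : ((Real.pi : ℝ) : ℂ) ≠ 0 := by exact_mod_cast Real.pi_ne_zero
    have hlamC : ((lam : ℝ) : ℂ) ≠ 0 := by exact_mod_cast hl
    set z : ℂ := -(Complex.I * 2 * Real.pi * N * lam) with hz
    have hz0 : z ≠ 0 := by
      rw [hz, neg_ne_zero]
      exact mul_ne_zero (mul_ne_zero (mul_ne_zero
        (mul_ne_zero Complex.I_ne_zero two_ne_zero) hpiC) hNC) hlamC
    have harg : ∀ u : ℝ, -(Complex.I * 2 * Real.pi * N * lam * u) = z * u := by
      intro u; rw [hz]; ring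
    simp only [harg]
    rw [integral_exp_mul_complex hz0]
    have e1 : z * (((((i:ℝ)+1)/N : ℝ)):ℂ) = -(Complex.I * (2 * Real.pi * lam) * ((i:ℝ)+1)) := by
      rw [hz]; push_cast; field_simp
    have e2 : z * ((((i:ℝ)/N : ℝ)):ℂ) = -(Complex.I * (2 * Real.pi * lam) * (i:ℝ)) := by
      rw [hz]; push_cast; field_simp
    rw [e1, e2, if_neg hl]
    set w : ℝ := Real.pi * lam with hwdef
    have key : Complex.exp (-(Complex.I * Real.pi * lam)) *
        (Complex.exp (-(Complex.I * (2 * Real.pi * lam) * ((i:ℝ)+1)))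
         - Complex.exp (-(Complex.I * (2 * Real.pi * lam) * (i:ℝ))))
        = Complex.exp (-(Complex.I * 2 * Real.pi * lam * ((i:ℝ)+1)))
          * (-2 * Complex.I * Complex.sin w) := by
      rw [← exp_ident w]
      rw [mul_sub, ← Complex.exp_add, ← Complex.exp_add, mul_sub, ← Complex.exp_add,
        ← Complex.exp_add]
      congr 2 <;> · push_cast [hwdef]; ring
    have goal_eq : (((Real.pi : ℂ) * lam / (Real.sin (Real.pi * lam) : ℝ)) : ℂ)
        * Complex.exp (-(Complex.I * Real.pi * lam))
        * ((Complex.exp (-(Complex.I * (2 * Real.pi * lam) * ((i:ℝ)+1)))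
           - Complex.exp (-(Complex.I * (2 * Real.pi * lam) * (i:ℝ)))) / z)
        = ((Real.pi : ℂ) * lam / (Real.sin (Real.pi * lam) : ℝ))
          * (Complex.exp (-(Complex.I * Real.pi * lam)) *
            (Complex.exp (-(Complex.I * (2 * Real.pi * lam) * ((i:ℝ)+1)))
             - Complex.exp (-(Complex.I * (2 * Real.pi * lam) * (i:ℝ))))) / z := by
      ring
    rw [goal_eq, key]
    have hs : Complex.sin (w : ℂ) = (Real.sin w : ℂ) := by rw [Complex.ofReal_sin]
    have hsC2 : Complex.sin ((Real.pi : ℂ) * lam) ≠ 0 := by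
      rw [← Complex.ofReal_mul, ← Complex.ofReal_sin]
      exact_mod_cast (hwdef ▸ hsinpos).ne'
    rw [hs, div_eq_iff hz0, hz, hwdef]
    field_simp [hsC2]

set_option maxHeartbeats 1600000 in
theorem riemann_sum_lemma (ψ : ℝ → ℝ) (L : NNReal)
    (hψ : ContDiffOn ℝ 1 ψ (Set.Icc 0 1))
    (hL : LipschitzOnWith L (deriv ψ) (Set.Icc 0 1)) :
    ∃ C : ℝ, ∀ N : ℕ, 0 < N → ∀ lam : ℝ, lam ∈ Set.Icc (0 : ℝ) 0.5 →
      Norm.norm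
        ((1 / N : ℂ) * ∑ t ∈ Finset.Icc 1 N,
            (ψ ((2 * t - 1) / (2 * N)) : ℂ) * Complex.exp (-(Complex.I * 2 * Real.pi * lam * t))
          - (∫ u in (0:ℝ)..1, (ψ u : ℂ) * Complex.exp (-(Complex.I * 2 * Real.pi * N * lam * u)))
              * Complex.exp (-(Complex.I * Real.pi * lam))
              * (if lam = 0 then 1 else (Real.pi * lam / Real.sin (Real.pi * lam) : ℂ)))
        ≤ C / N := by
  -- a Lipschitz constant for ψ on [0,1]
  have hd : ContinuousOn (derivWithin ψ (Set.Icc 0 1)) (Set.Icc 0 1) :=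
    hψ.continuousOn_derivWithin (uniqueDiffOn_Icc zero_lt_one) le_rfl
  obtain ⟨M, hM⟩ := isCompact_Icc.exists_bound_of_continuousOn hd
  set K : NNReal := M.toNNReal with hKdef
  have hKψ : LipschitzOnWith K ψ (Set.Icc 0 1) := by
    apply (convex_Icc (0:ℝ) 1).lipschitzOnWith_of_nnnorm_derivWithin_le
      (hψ.differentiableOn one_ne_zero)
    intro x hx
    simp only [← NNReal.coe_le_coe, coe_nnnorm, hKdef, Real.coe_toNNReal']
    exact le_max_of_le_left (hM x hx)
  refine ⟨Real.pi / 2 * K, ?_⟩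
  intro N hN lam hlam
  obtain ⟨hlam0, hlam1⟩ := hlam
  have hlam1' : lam ≤ 0.5 := hlam1
  have hNr : (0:ℝ) < N := Nat.cast_pos.mpr hN
  set F : ℂ := (if lam = 0 then 1 else (Real.pi * lam / Real.sin (Real.pi * lam) : ℂ)) with hF
  set f : ℝ → ℂ :=
    fun u => (ψ u : ℂ) * Complex.exp (-(Complex.I * 2 * Real.pi * N * lam * u)) with hf
  set E : ℝ → ℂ := fun u => Complex.exp (-(Complex.I * 2 * Real.pi * N * lam * u)) with hE
  have hEc : Continuous E := by
    apply Complex.continuous_exp.comp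
    continuity
  have hfc : ContinuousOn f (Set.Icc 0 1) :=
    (Complex.continuous_ofReal.comp_continuousOn hψ.continuousOn).mul hEc.continuousOn
  set a : ℕ → ℝ := fun i => i / N with ha
  have hmono : ∀ i : ℕ, a i ≤ a (i+1) := by
    intro i
    rw [ha, div_le_div_iff₀ hNr hNr]
    push_cast
    nlinarith [hNr.le]
  have hsub : ∀ i : ℕ, i < N → Set.uIcc (a i) (a (i+1)) ⊆ Set.Icc 0 1 := by
    intro i hi
    rw [Set.uIcc_of_le (hmono i)]
    apply Set.Icc_subset_Icc
    · positivity
    · rw [div_le_one hNr]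
      exact_mod_cast hi
  have hint : ∀ i < N, IntervalIntegrable f MeasureTheory.volume (a i) (a (i+1)) := by
    intro i hi
    exact (hfc.mono (hsub i hi)).intervalIntegrable
  have hsplit : (∫ u in (0:ℝ)..1, f u) = ∑ i ∈ Finset.range N, ∫ u in a i..a (i+1), f u := by
    have h := intervalIntegral.sum_integral_adjacent_intervals hint
    have h0 : a 0 = 0 := by simp [ha]
    have h1 : a N = 1 := by simp only [ha]; exact div_self hNr.ne'
    rw [h0, h1] at h
    exact h.symm
  -- canonical form of the summand
  set m : ℕ → ℝ := fun i => (2 * ((i:ℝ)+1) - 1) / (2 * N) with hm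
  have hsum : ∑ t ∈ Finset.Icc 1 N,
      (ψ ((2 * t - 1) / (2 * N)) : ℂ) * Complex.exp (-(Complex.I * 2 * Real.pi * lam * t))
      = ∑ i ∈ Finset.range N,
        (ψ (m i) : ℂ) * Complex.exp (-(Complex.I * 2 * Real.pi * lam * ((i:ℝ)+1))) := by
    rw [← Finset.Ico_add_one_right_eq_Icc, Finset.sum_Ico_eq_sum_range]
    apply Finset.sum_congr rfl
    intro i _
    rw [hm]
    push_cast
    ring_nf
  -- per-interval identity
  have hterm : ∀ i : ℕ, i < N →
      (1 / N : ℂ) * ((ψ (m i) : ℂ) * Complex.exp (-(Complex.I * 2 * Real.pi * lam * ((i:ℝ)+1))))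
      - (∫ u in a i..a (i+1), f u) * Complex.exp (-(Complex.I * Real.pi * lam)) * F
      = Complex.exp (-(Complex.I * Real.pi * lam)) * F *
        ∫ u in a i..a (i+1), ((ψ (m i) : ℂ) - ψ u) * E u := by
    intro i hi
    have hEi : IntervalIntegrable E MeasureTheory.volume (a i) (a (i+1)) :=
      hEc.intervalIntegrable _ _
    have hsplit2 : (∫ u in a i..a (i+1), ((ψ (m i) : ℂ) - ψ u) * E u)
        = (ψ (m i) : ℂ) * (∫ u in a i..a (i+1), E u) - ∫ u in a i..a (i+1), f u := by
      have : ∀ u : ℝ, ((ψ (m i) : ℂ) - ψ u) * E u = (ψ (m i) : ℂ) * E u - f u := by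
        intro u; rw [hf, hE]; ring
      simp only [this]
      rw [intervalIntegral.integral_sub (hEi.const_mul _) (hint i hi),
        intervalIntegral.integral_const_mul]
    have haux := exp_integral_aux N hN lam hlam0 hlam1' i
    have hai : a i = (i:ℝ)/N := rfl
    have hai1 : a (i+1) = ((i:ℝ)+1)/N := by rw [ha]; push_cast; ring_nf
    have hkey : Complex.exp (-(Complex.I * Real.pi * lam)) * (F * ∫ u in a i..a (i+1), E u)
        = (1 / N : ℂ) * Complex.exp (-(Complex.I * 2 * Real.pi * lam * ((i:ℝ)+1))) := by
      rw [← haux, hai, hai1, hF, hE]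
      ring
    rw [hsplit2, mul_sub,
      show Complex.exp (-(Complex.I * Real.pi * lam)) * F *
          ((ψ (m i) : ℂ) * ∫ u in a i..a (i+1), E u)
        = (ψ (m i) : ℂ) * (Complex.exp (-(Complex.I * Real.pi * lam)) *
          (F * ∫ u in a i..a (i+1), E u)) from by ring, hkey]
    ring
  -- assemble
  rw [hsum, hsplit, Finset.mul_sum, Finset.sum_mul, Finset.sum_mul, ← Finset.sum_sub_distrib]
  have habs_e : ‖Complex.exp (-(Complex.I * Real.pi * lam))‖ = 1 := by
    rw [Complex.norm_exp]
    simp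
  have habs_F : ‖F‖ ≤ Real.pi / 2 := by
    by_cases hl : lam = 0
    · rw [hF, if_pos hl]
      simp
      linarith [Real.pi_gt_three]
    · rw [hF, if_neg hl]
      have hlam0' : 0 < lam := lt_of_le_of_ne hlam0 (Ne.symm hl)
      have hw0 : 0 < Real.pi * lam := by positivity
      have hwle : Real.pi * lam ≤ Real.pi / 2 := by nlinarith [Real.pi_pos]
      have hsinpos : 0 < Real.sin (Real.pi * lam) :=
        Real.sin_pos_of_pos_of_lt_pi hw0 (by nlinarith [Real.pi_pos])
      have h2 : 2 * lam ≤ Real.sin (Real.pi * lam) := by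
        have := Real.mul_le_sin hw0.le hwle
        have hpi := Real.pi_pos
        calc 2 * lam = 2 / Real.pi * (Real.pi * lam) := by field_simp
        _ ≤ Real.sin (Real.pi * lam) := this
      have : ‖(Real.pi : ℂ) * lam / (Real.sin (Real.pi * lam) : ℝ)‖
          = Real.pi * lam / Real.sin (Real.pi * lam) := by
        rw [norm_div, norm_mul, Complex.norm_real, Complex.norm_real, Complex.norm_real,
          Real.norm_eq_abs, Real.norm_eq_abs, Real.norm_eq_abs,
          abs_of_pos Real.pi_pos, abs_of_pos hlam0', abs_of_pos hsinpos]
      rw [this, div_le_iff₀ hsinpos]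
      nlinarith
  have hbound : ∀ i ∈ Finset.range N,
      ‖(1 / N : ℂ) * ((ψ (m i) : ℂ)
          * Complex.exp (-(Complex.I * 2 * Real.pi * lam * ((i:ℝ)+1))))
        - (∫ u in a i..a (i+1), f u) * Complex.exp (-(Complex.I * Real.pi * lam)) * F‖
      ≤ Real.pi / 2 * K / N * (1 / N) := by
    intro i hi
    rw [Finset.mem_range] at hi
    rw [hterm i hi]
    have hmi : m i ∈ Set.Icc (0:ℝ) 1 := by
      constructor
      · rw [hm]
        have h0i : (0:ℝ) ≤ (i:ℝ) := Nat.cast_nonneg i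
        apply div_nonneg (by linarith) (by positivity)
      · rw [hm, div_le_one (by positivity)]
        have : (i:ℝ) + 1 ≤ N := by exact_mod_cast hi
        linarith
    have hJ : ‖∫ u in a i..a (i+1), ((ψ (m i) : ℂ) - ψ u) * E u‖ ≤ (K / N) * |a (i+1) - a i| := by
      apply intervalIntegral.norm_integral_le_of_norm_le_const
      intro u hu
      have hu' : u ∈ Set.Icc (0:ℝ) 1 := hsub i hi (Set.uIoc_subset_uIcc hu)
      have hrange : u ∈ Set.Ioc (a i) (a (i+1)) := by
        rwa [Set.uIoc_of_le (hmono i)] at hu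
      have habsE : ‖E u‖ = 1 := by
        rw [hE, Complex.norm_exp]; simp
      have : ‖((ψ (m i) : ℂ) - ψ u) * E u‖ = |ψ (m i) - ψ u| := by
        rw [norm_mul, habsE, mul_one,
          ← Complex.ofReal_sub, Complex.norm_real, Real.norm_eq_abs]
      rw [this]
      have hdist := hKψ.dist_le_mul (m i) hmi u hu'
      rw [Real.dist_eq, Real.dist_eq] at hdist
      have hmu : |m i - u| ≤ 1 / N := by
        have h1 : a i ≤ m i := by
          rw [ha, hm, div_le_div_iff₀ hNr (by positivity)]
          push_cast
          nlinarith [hNr.le]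
        have h2 : m i ≤ a (i+1) := by
          rw [ha, hm, div_le_div_iff₀ (by positivity) hNr]
          push_cast
          nlinarith [hNr.le]
        have h3 : a (i+1) - a i = 1 / N := by
          rw [ha]; push_cast; field_simp
          ring
        rw [abs_le]
        constructor
        · linarith [hrange.2]
        · linarith [hrange.1.le]
      calc |ψ (m i) - ψ u| ≤ (K:ℝ) * |m i - u| := hdist
        _ ≤ (K:ℝ) * (1/N) := mul_le_mul_of_nonneg_left hmu K.coe_nonneg
        _ = (K:ℝ) / N := by ring
    have h3 : |a (i+1) - a i| = 1 / N := by
      rw [ha]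
      push_cast
      rw [_root_.abs_of_nonneg (by rw [sub_nonneg, div_le_div_iff₀ hNr hNr]; nlinarith [hNr.le] : (0:ℝ) ≤ ((i:ℝ)+1)/N - (i:ℝ)/N)]
      field_simp
      ring
    rw [norm_mul, norm_mul, habs_e, one_mul]
    calc ‖F‖ * ‖∫ u in a i..a (i+1), ((ψ (m i) : ℂ) - ψ u) * E u‖
        ≤ (Real.pi / 2) * ((K:ℝ) / N * (1 / N)) := by
          apply mul_le_mul habs_F ?_ (norm_nonneg _) (by positivity)
          calc ‖∫ u in a i..a (i+1), ((ψ (m i) : ℂ) - ψ u) * E u‖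
              ≤ (K:ℝ) / N * |a (i+1) - a i| := hJ
            _ = (K:ℝ) / N * (1 / N) := by rw [h3]
      _ = Real.pi / 2 * (K:ℝ) / N * (1 / N) := by ring
  refine le_trans (norm_sum_le _ _) ?_
  refine le_trans (Finset.sum_le_sum hbound) ?_
  rw [Finset.sum_const, Finset.card_range, nsmul_eq_mul]
  apply le_of_eq
  field_simp
end

section
/- Define H₂^{(N)}(f) = (1/N) Σ_{t=1}^N h_t² e^{-i 2π t f} where h_t = h((2t−1)/(2N)) for a C¹ function h: [0,1] → ℝ with h(0) = h(1) = 0 and (h²)' Lipschitz. Then there exists a constant C such that |H₂^{(N)}(f)| ≤ C/(N f) for all f with 0 < f ≤ 1/2 and all N ≥ 1. -/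
open Real Complex Finset


lemma geom_bound (f : ℝ) (hf0 : 0 < f) (hf : f ≤ 1/2) (m : ℕ) :
    ‖∑ j ∈ Finset.range m, Complex.exp (-(Complex.I * 2 * Real.pi * (j+1) * f))‖
      ≤ 1/(2*f) := by
  have hπ := Real.pi_pos
  set z : ℂ := Complex.exp ((-(2*Real.pi*f) : ℝ) * Complex.I) with hz
  have habsz : ‖z‖ = 1 := by
    rw [hz, Complex.norm_exp]
    simp
  have hterm : ∀ j : ℕ, Complex.exp (-(Complex.I * 2 * Real.pi * (j+1) * f)) = z ^ (j+1) := by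
    intro j
    rw [hz, ← Complex.exp_nat_mul]
    congr 1
    push_cast
    ring
  have hz1 : z ≠ 1 := by
    rw [hz]
    intro hc
    rw [Complex.exp_eq_one_iff] at hc
    obtain ⟨n, hn⟩ := hc
    have him := congrArg Complex.im hn
    simp [Complex.mul_im, Complex.mul_re] at him
    have hn0 : (n : ℝ) = -f := by nlinarith
    rcases lt_trichotomy n 0 with h | h | h
    · have hn1 : n ≤ -1 := by omega
      have : (n : ℝ) ≤ -1 := by exact_mod_cast hn1
      nlinarith
    · simp [h] at hn0; linarith
    · have : (1 : ℝ) ≤ (n : ℝ) := by exact_mod_cast h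
      nlinarith
  have hlow : 4*f ≤ ‖z - 1‖ := by
    have hsq : ‖z - 1‖ ^ 2 = 2 - 2 * Real.cos (2*Real.pi*f) := by
      rw [Complex.sq_norm, Complex.normSq_apply]
      simp only [hz, Complex.sub_re, Complex.sub_im, Complex.exp_ofReal_mul_I_re,
        Complex.exp_ofReal_mul_I_im, Complex.one_re, Complex.one_im,
        Real.sin_neg, Real.cos_neg]
      have h1 := Real.sin_sq_add_cos_sq (2*Real.pi*f)
      nlinarith
    have hs : 2*f ≤ Real.sin (Real.pi * f) := by
      have hle : Real.pi * f ≤ Real.pi / 2 := by nlinarith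
      have := Real.mul_le_sin (x := Real.pi * f) (by positivity) hle
      have h2f : 2*f = 2/Real.pi * (Real.pi * f) := by field_simp
      calc 2*f = 2/Real.pi * (Real.pi * f) := h2f
        _ ≤ _ := this
    have hcos : Real.cos (2*Real.pi*f) = 1 - 2 * Real.sin (Real.pi*f)^2 := by
      have h2 : 2*Real.pi*f = 2*(Real.pi*f) := by ring
      rw [h2, Real.cos_two_mul']
      have h3 := Real.sin_sq_add_cos_sq (Real.pi*f)
      nlinarith
    have habs : 0 ≤ ‖z-1‖ := norm_nonneg _
    nlinarith
  have hnum : ‖z^m - 1‖ ≤ 2 := by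
    calc ‖z^m - 1‖ ≤ ‖z^m‖ + 1 := by
          simpa using norm_sub_le (z^m) 1
      _ ≤ 2 := by rw [norm_pow, habsz]; norm_num
  calc ‖∑ j ∈ Finset.range m, Complex.exp (-(Complex.I * 2 * Real.pi * (j+1) * f))‖
      = ‖z * ((z^m - 1)/(z-1))‖ := by
        rw [← geom_sum_eq hz1, Finset.mul_sum]
        congr 1
        exact Finset.sum_congr rfl (fun j _ => by rw [hterm j, pow_succ]; ring)
    _ = ‖z^m - 1‖ / ‖z - 1‖ := by
        rw [norm_mul, habsz, one_mul, norm_div]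
    _ ≤ 2 / (4*f) := div_le_div₀ (by norm_num) hnum (by positivity) hlow
    _ = 1/(2*f) := by ring

theorem H2_decay_bound (h : ℝ → ℝ)
    (hC1 : ContDiffOn ℝ 1 h (Set.Icc 0 1))
    (h0 : h 0 = 0) (h1 : h 1 = 0)
    (L : NNReal) (hL : LipschitzOnWith L (deriv (fun x => (h x) ^ 2)) (Set.Icc 0 1)) :
    ∃ C : ℝ, ∀ N : ℕ, 1 ≤ N → ∀ f : ℝ, 0 < f → f ≤ 1 / 2 →
      ‖(1 / N : ℂ) * ∑ t ∈ Finset.Icc 1 N,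
          ((h ((2 * t - 1) / (2 * N))) ^ 2 : ℝ) * Complex.exp (-(Complex.I * 2 * Real.pi * t * f))‖
        ≤ C / (N * f) := by
  have GB : ∀ (f : ℝ), 0 < f → f ≤ 1/2 → ∀ m : ℕ,
      ‖∑ j ∈ Finset.range m, Complex.exp (-(Complex.I * 2 * Real.pi * (j+1) * f))‖
      ≤ 1/(2*f) := fun f hf0 hf m => geom_bound f hf0 hf m
  obtain ⟨K, hK⟩ : ∃ K : NNReal, LipschitzOnWith K (fun x => h x ^ 2) (Set.Icc (0:ℝ) 1) := by
    have hg : ContDiffOn ℝ 1 (fun x => h x ^ 2) (Set.Icc 0 1) := hC1.pow 2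
    have hu : UniqueDiffOn ℝ (Set.Icc (0:ℝ) 1) := uniqueDiffOn_Icc one_pos
    have hcont := hg.continuousOn_fderivWithin hu le_rfl
    obtain ⟨C, hC⟩ := (isCompact_Icc).exists_bound_of_continuousOn hcont
    refine ⟨C.toNNReal, ?_⟩
    apply Convex.lipschitzOnWith_of_nnnorm_fderivWithin_le (hg.differentiableOn one_ne_zero)
      ?_ (convex_Icc 0 1)
    intro x hx
    rw [← NNReal.coe_le_coe]
    exact le_trans (by simpa using hC x hx) (Real.le_coe_toNNReal C)
  set g : ℝ → ℝ := fun x => h x ^ 2 with hgdef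
  refine ⟨K, ?_⟩
  intro N hN f hf0 hf
  have hNpos : (0:ℝ) < N := by exact_mod_cast hN
  have hK0 : (0:ℝ) ≤ K := K.coe_nonneg
  set E : ℕ → ℂ := fun j => Complex.exp (-(Complex.I * 2 * Real.pi * (j+1) * f)) with hE
  set x : ℕ → ℝ := fun j => (2*((1+j : ℕ) : ℝ) - 1)/(2*(N:ℝ)) with hx
  set A : ℕ → ℂ := fun j => ((g (x j) : ℝ) : ℂ) with hA
  -- reindex
  have hre : (∑ t ∈ Finset.Icc 1 N,
      ((h ((2 * t - 1) / (2 * N))) ^ 2 : ℝ) * Complex.exp (-(Complex.I * 2 * Real.pi * t * f)))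
      = ∑ j ∈ Finset.range N, A j * E j := by
    rw [← Finset.Ico_add_one_right_eq_Icc, Finset.sum_Ico_eq_sum_range]
    refine Finset.sum_congr (by norm_num) (fun j _ => ?_)
    rw [hA, hE, hgdef]
    congr 2
    · push_cast; ring
  have hxmem : ∀ j, j < N → x j ∈ Set.Icc (0:ℝ) 1 := by
    intro j hj
    constructor
    · apply div_nonneg _ (by positivity)
      have : (1:ℝ) ≤ ((1+j:ℕ):ℝ) := by exact_mod_cast (by omega : 1 ≤ 1+j)
      linarith
    · rw [div_le_one (by positivity)]
      have : ((1+j:ℕ):ℝ) ≤ N := by exact_mod_cast (by omega : 1+j ≤ N)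
      linarith
  have h1mem : (1:ℝ) ∈ Set.Icc (0:ℝ) 1 := by constructor <;> norm_num
  have hg1 : g 1 = 0 := by rw [hgdef]; simp [h1]
  have habsA : ∀ j, j < N → ‖A j‖ ≤ K := by
    intro j hj
    rw [hA, Complex.norm_real, Real.norm_eq_abs]
    have hlip := hK.dist_le_mul (x j) (hxmem j hj) 1 h1mem
    rw [Real.dist_eq, Real.dist_eq, hg1, sub_zero] at hlip
    have hx01 := hxmem j hj
    have hd : |x j - 1| ≤ 1 := by
      rw [abs_le]; constructor <;> [linarith [hx01.1]; linarith [hx01.2]]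
    calc |g (x j)| ≤ K * |x j - 1| := hlip
      _ ≤ K * 1 := by gcongr
      _ = K := mul_one _
  have hdiff : ∀ j, j + 1 < N → ‖A (j+1) - A j‖ ≤ K * (1/N) := by
    intro j hj
    have hm1 := hxmem j (by omega)
    have hm2 := hxmem (j+1) hj
    have hxd : x (j+1) - x j = 1/N := by
      rw [hx]; push_cast; field_simp; ring
    have heq : ‖A (j+1) - A j‖ = |g (x (j+1)) - g (x j)| := by
      rw [hA, ← Complex.ofReal_sub, Complex.norm_real, Real.norm_eq_abs]
    rw [heq]
    calc |g (x (j+1)) - g (x j)| ≤ K * |x (j+1) - x j| := by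
          have := hK.dist_le_mul (x (j+1)) hm2 (x j) hm1
          rwa [Real.dist_eq, Real.dist_eq] at this
      _ = K * (1/N) := by rw [hxd, abs_of_pos (by positivity)]
  -- Abel summation
  have habel := Finset.sum_range_by_parts A E N
  simp only [smul_eq_mul] at habel
  have hS : ‖∑ j ∈ Finset.range N, A j * E j‖ ≤ K / f := by
    rw [habel]
    refine le_trans (norm_sub_le _ _) ?_
    have term1 : ‖A (N-1) * ∑ j ∈ Finset.range N, E j‖ ≤ K * (1/(2*f)) := by
      rw [norm_mul]
      exact mul_le_mul (habsA (N-1) (by omega)) (GB f hf0 hf N)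
        (norm_nonneg _) hK0
    have term2 : ‖∑ j ∈ Finset.range (N-1),
        (A (j+1) - A j) * ∑ k ∈ Finset.range (j+1), E k‖ ≤ K * (1/(2*f)) := by
      refine le_trans (norm_sum_le _ _) ?_
      have step : ∀ j ∈ Finset.range (N-1),
          ‖(A (j+1) - A j) * ∑ k ∈ Finset.range (j+1), E k‖
          ≤ (K * (1/N)) * (1/(2*f)) := by
        intro j hj
        rw [Finset.mem_range] at hj
        rw [norm_mul]
        exact mul_le_mul (hdiff j (by omega)) (GB f hf0 hf (j+1))
          (norm_nonneg _) (by positivity)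
      refine le_trans (Finset.sum_le_sum step) ?_
      rw [Finset.sum_const, Finset.card_range, nsmul_eq_mul]
      have hcard : ((N-1:ℕ):ℝ) ≤ N := by exact_mod_cast Nat.sub_le N 1
      calc ((N-1:ℕ):ℝ) * ((K * (1/N)) * (1/(2*f))) ≤ (N:ℝ) * ((K * (1/N)) * (1/(2*f))) := by
            gcongr
        _ = K * (1/(2*f)) := by field_simp
    calc ‖A (N-1) * ∑ j ∈ Finset.range N, E j‖
          + ‖∑ j ∈ Finset.range (N-1), (A (j+1) - A j) * ∑ k ∈ Finset.range (j+1), E k‖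
        ≤ K * (1/(2*f)) + K * (1/(2*f)) := add_le_add term1 term2
      _ = K / f := by field_simp; ring
  rw [hre, norm_mul]
  have habs1N : ‖(1/N : ℂ)‖ = 1/(N:ℝ) := by
    rw [norm_div, norm_one, Complex.norm_natCast]
  rw [habs1N]
  calc (1/(N:ℝ)) * ‖∑ j ∈ Finset.range N, A j * E j‖
      ≤ (1/(N:ℝ)) * (K / f) := by gcongr
    _ = K / (N * f) := by field_simp
end
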